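/- (Lemma on stationary points of low-rank tensor approximation) Let X = X1' · X2 · X3'' be in the fixed TT-rank (r1,r2) manifold with X1' in St(r1,n1), X3''^T in St(r2,n3), and suppose X2'' := R · X2' · C (with X2 = X2'·C left-orthogonal conventions as stated) satisfies the orthogonality conventions. Let A = A1' · A2 · A3'' have TT-rank (r1', r2') with A1' in St(r1',n1), A3''^T in St(r2',n3). If the Riemannian gradient of f(Z) = (1/2)‖Z − A‖² at X vanishes (equivalently Ẇ1 = 0, W̃2 = 0, Ŵ3 = 0 in the tangent-space parametrization), then there exist B1 in St(r1, r1') and B3 with B3^T in St(r2, r2') such that X1' = A1' B1, X3'' = B3 A3'', and X2 = B1^T · A2 · B3^T. -/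

import Mathlib

open Matrix Kronecker

/-- Left unfolding of a third-order tensor (column-major convention:
the second mode index varies fastest in the column index `(c, b)`). -/
def tL {a b c : ℕ} (X : Fin a → Fin b → Fin c → ℝ) : Matrix (Fin a) (Fin c × Fin b) ℝ :=
  Matrix.of fun i p => X i p.2 p.1

/-- Right unfolding of a third-order tensor (the first mode index varies
fastest in the row index `(b, a)`). -/
def tR {a b c : ℕ} (X : Fin a → Fin b → Fin c → ℝ) : Matrix (Fin b × Fin a) (Fin c) ℝ :=
  Matrix.of fun p k => X p.2 p.1 k

/-- Tensor-train product `X1 · X2 · X3` of a matrix, a core tensor and a matrix. -/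
def tt {a r1 b r2 c : ℕ} (X1 : Matrix (Fin a) (Fin r1) ℝ) (X2 : Fin r1 → Fin b → Fin r2 → ℝ)
    (X3 : Matrix (Fin r2) (Fin c) ℝ) : Fin a → Fin b → Fin c → ℝ :=
  fun i j k => ∑ p : Fin r1, ∑ q : Fin r2, X1 i p * X2 p j q * X3 q k

/-- Euclidean inner product of (the vectorizations of) two third-order tensors. -/
def tinner {a b c : ℕ} (Y Z : Fin a → Fin b → Fin c → ℝ) : ℝ :=
  ∑ i, ∑ j, ∑ k, Y i j k * Z i j k

/-- Contraction of a matrix with a tensor on the first mode: `M · Y`. -/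
def m1 {a a' b c : ℕ} (M : Matrix (Fin a) (Fin a') ℝ) (Y : Fin a' → Fin b → Fin c → ℝ) :
    Fin a → Fin b → Fin c → ℝ := fun i j k => ∑ p, M i p * Y p j k

/-- Contraction of a tensor with a matrix on the third mode: `Y · N`. -/
def m3 {a b c c' : ℕ} (Y : Fin a → Fin b → Fin c → ℝ) (N : Matrix (Fin c) (Fin c') ℝ) :
    Fin a → Fin b → Fin c' → ℝ := fun i j k => ∑ p, Y i j p * N p k

/-- Inverse of the left unfolding: reshape a matrix back into a tensor. -/
def unL {a b c : ℕ} (M : Matrix (Fin a) (Fin c × Fin b) ℝ) : Fin a → Fin b → Fin c → ℝ :=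
  fun i j k => M i (k, j)

-- slice
def sl {a b c : ℕ} (Y : Fin a → Fin b → Fin c → ℝ) (j : Fin b) : Matrix (Fin a) (Fin c) ℝ :=
  Matrix.of fun i k => Y i j k

lemma sl_tt {a r1 b r2 c : ℕ} (X1 : Matrix (Fin a) (Fin r1) ℝ) (X2 : Fin r1 → Fin b → Fin r2 → ℝ)
    (X3 : Matrix (Fin r2) (Fin c) ℝ) (j : Fin b) :
    sl (tt X1 X2 X3) j = X1 * sl X2 j * X3 := by
  ext i k
  simp only [sl, tt, Matrix.of_apply, Matrix.mul_apply, Finset.sum_mul, mul_assoc]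
  rw [Finset.sum_comm]

lemma tL_tt {a r1 b r2 c : ℕ} (X1 : Matrix (Fin a) (Fin r1) ℝ) (X2 : Fin r1 → Fin b → Fin r2 → ℝ)
    (X3 : Matrix (Fin r2) (Fin c) ℝ) :
    tL (tt X1 X2 X3) = X1 * tL (m3 X2 X3) := by
  ext i x
  simp [tL, tt, m3, Matrix.mul_apply, Finset.mul_sum, mul_assoc]

lemma tR_tt {a r1 b r2 c : ℕ} (X1 : Matrix (Fin a) (Fin r1) ℝ) (X2 : Fin r1 → Fin b → Fin r2 → ℝ)
    (X3 : Matrix (Fin r2) (Fin c) ℝ) :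
    tR (tt X1 X2 X3) = tR (m1 X1 X2) * X3 := by
  ext x k
  simp only [tR, tt, m1, Matrix.of_apply, Matrix.mul_apply, Finset.sum_mul]
  rw [Finset.sum_comm]

lemma tL_m3 {a b c c' : ℕ} (C : Fin a → Fin b → Fin c → ℝ) (X3 : Matrix (Fin c) (Fin c') ℝ) :
    tL (m3 C X3) = tL C * (X3 ⊗ₖ (1 : Matrix (Fin b) (Fin b) ℝ)) := by
  ext i x
  simp only [tL, m3, Matrix.of_apply, Matrix.mul_apply, Fintype.sum_prod_type,
    Matrix.kroneckerMap_apply, Matrix.one_apply, mul_ite, mul_one, mul_zero,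
    Finset.sum_ite_eq, Finset.sum_ite_eq', Finset.mem_univ, if_true]

lemma tR_m1 {a a' b c : ℕ} (X1 : Matrix (Fin a) (Fin a') ℝ) (C : Fin a' → Fin b → Fin c → ℝ) :
    tR (m1 X1 C) = ((1 : Matrix (Fin b) (Fin b) ℝ) ⊗ₖ X1) * tR C := by
  ext x k
  simp only [tR, m1, Matrix.of_apply, Matrix.mul_apply, Fintype.sum_prod_type,
    Matrix.kroneckerMap_apply, Matrix.one_apply, ite_mul, one_mul, zero_mul]
  symm
  rw [Finset.sum_comm]
  simp

lemma tinner_tL {a b c : ℕ} (Y Z : Fin a → Fin b → Fin c → ℝ) :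
    tinner Y Z = Matrix.trace (tL Y * (tL Z)ᵀ) := by
  simp only [tinner, Matrix.trace, Matrix.diag, Matrix.mul_apply, Matrix.transpose_apply,
    tL, Matrix.of_apply, Fintype.sum_prod_type]
  refine Finset.sum_congr rfl fun i _ => ?_
  rw [Finset.sum_comm]

lemma tinner_tR {a b c : ℕ} (Y Z : Fin a → Fin b → Fin c → ℝ) :
    tinner Y Z = Matrix.trace ((tR Y)ᵀ * tR Z) := by
  simp only [tinner, Matrix.trace, Matrix.diag, Matrix.mul_apply, Matrix.transpose_apply,
    tR, Matrix.of_apply, Fintype.sum_prod_type]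
  conv_lhs => rw [Finset.sum_comm]
  conv_lhs => enter [2, j]; rw [Finset.sum_comm]
  conv_lhs => rw [Finset.sum_comm]

lemma tinner_sl {a b c : ℕ} (Y Z : Fin a → Fin b → Fin c → ℝ) :
    tinner Y Z = ∑ j, Matrix.trace (sl Y j * (sl Z j)ᵀ) := by
  simp only [tinner, Matrix.trace, Matrix.diag, Matrix.mul_apply, Matrix.transpose_apply,
    sl, Matrix.of_apply]
  rw [Finset.sum_comm]

lemma trace_mul_transpose_self_nonneg {m n : ℕ} (H : Matrix (Fin m) (Fin n) ℝ) :
    0 ≤ Matrix.trace (H * Hᵀ) := by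
  simp only [Matrix.trace, Matrix.diag, Matrix.mul_apply, Matrix.transpose_apply]
  exact Finset.sum_nonneg fun i _ => Finset.sum_nonneg fun j _ => mul_self_nonneg _

lemma eq_zero_of_trace_mul_transpose_self {m n : ℕ} (H : Matrix (Fin m) (Fin n) ℝ)
    (h : Matrix.trace (H * Hᵀ) = 0) : H = 0 := by
  simp only [Matrix.trace, Matrix.diag, Matrix.mul_apply, Matrix.transpose_apply] at h
  ext i j
  have h1 := (Finset.sum_eq_zero_iff_of_nonneg
    (fun i _ => Finset.sum_nonneg fun j _ => mul_self_nonneg (H i j))).mp h i (Finset.mem_univ i)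
  have h2 := (Finset.sum_eq_zero_iff_of_nonneg
    (fun j _ => mul_self_nonneg (H i j))).mp h1 j (Finset.mem_univ j)
  simpa using mul_self_eq_zero.mp h2

lemma isUnit_of_rank_eq {r : ℕ} (A : Matrix (Fin r) (Fin r) ℝ) (h : A.rank = r) : IsUnit A := by
  rw [← Matrix.mulVec_surjective_iff_isUnit]
  have htop : LinearMap.range A.mulVecLin = ⊤ := by
    apply Submodule.eq_top_of_finrank_eq
    rw [Module.finrank_fin_fun]
    exact h
  intro y
  have : y ∈ LinearMap.range A.mulVecLin := htop ▸ Submodule.mem_top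
  obtain ⟨x, hx⟩ := this
  exact ⟨x, hx⟩

lemma tinner_add_right {a b c : ℕ} (Y Z W : Fin a → Fin b → Fin c → ℝ) :
    tinner Y (Z + W) = tinner Y Z + tinner Y W := by
  simp [tinner, mul_add, Finset.sum_add_distrib]

lemma tt_zero2 {a r1 b r2 c : ℕ} (X1 : Matrix (Fin a) (Fin r1) ℝ)
    (X3 : Matrix (Fin r2) (Fin c) ℝ) :
    tt X1 (0 : Fin r1 → Fin b → Fin r2 → ℝ) X3 = 0 := by
  funext i j k; simp [tt]

lemma tt_zero3 {a r1 b r2 c : ℕ} (X1 : Matrix (Fin a) (Fin r1) ℝ)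
    (X2 : Fin r1 → Fin b → Fin r2 → ℝ) :
    tt X1 X2 (0 : Matrix (Fin r2) (Fin c) ℝ) = 0 := by
  funext i j k; simp [tt]

lemma tt_zero1 {a r1 b r2 c : ℕ} (X2 : Fin r1 → Fin b → Fin r2 → ℝ)
    (X3 : Matrix (Fin r2) (Fin c) ℝ) :
    tt (0 : Matrix (Fin a) (Fin r1) ℝ) X2 X3 = 0 := by
  funext i j k; simp [tt]

lemma tinner_zero_right {a b c : ℕ} (Y : Fin a → Fin b → Fin c → ℝ) :
    tinner Y 0 = 0 := by simp [tinner]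

lemma trace_helper {n1 r1 r2 n3 : ℕ} (Dj : Matrix (Fin n1) (Fin n3) ℝ)
    (X1 : Matrix (Fin n1) (Fin r1) ℝ) (G : Matrix (Fin r1) (Fin r2) ℝ)
    (X3 : Matrix (Fin r2) (Fin n3) ℝ) :
    Matrix.trace (Dj * (X1 * G * X3)ᵀ) = Matrix.trace ((X1ᵀ * Dj * X3ᵀ) * Gᵀ) := by
  rw [show (X1 * G * X3)ᵀ = X3ᵀ * Gᵀ * X1ᵀ by
    rw [Matrix.transpose_mul, Matrix.transpose_mul, Matrix.mul_assoc]]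
  rw [← Matrix.mul_assoc, ← Matrix.mul_assoc, Matrix.trace_mul_comm,
    ← Matrix.mul_assoc, ← Matrix.mul_assoc]

theorem stmt12 {n1 n2 n3 r1 r2 r1' r2' : ℕ}
    (X1' X1 : Matrix (Fin n1) (Fin r1) ℝ)
    (X2 X2' X2'' : Fin r1 → Fin n2 → Fin r2 → ℝ)
    (X3'' X3 : Matrix (Fin r2) (Fin n3) ℝ)
    (A1' : Matrix (Fin n1) (Fin r1') ℝ) (A2 : Fin r1' → Fin n2 → Fin r2' → ℝ)
    (A3'' : Matrix (Fin r2') (Fin n3) ℝ) (A : Fin n1 → Fin n2 → Fin n3 → ℝ)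
    (hA : A = tt A1' A2 A3'')
    (h1 : X1'ᵀ * X1' = 1) (h3 : X3'' * X3''ᵀ = 1)
    (h2' : (tR X2')ᵀ * tR X2' = 1) (h2'' : tL X2'' * (tL X2'')ᵀ = 1)
    (hfac1 : tt X1' X2 X3'' = tt X1' X2' X3)
    (hfac2 : tt X1' X2 X3'' = tt X1 X2'' X3'')
    (hA1 : A1'ᵀ * A1' = 1) (hA3 : A3'' * A3''ᵀ = 1)
    (hrkL : (tL (tt X1' X2 X3'')).rank = r1) (hrkR : (tR (tt X1' X2 X3'')).rank = r2)
    (hArkL : (tL A).rank = r1') (hArkR : (tR A).rank = r2')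
    (hstat : ∀ (W1 : Matrix (Fin n1) (Fin r1) ℝ) (W2 : Fin r1 → Fin n2 → Fin r2 → ℝ)
        (W3 : Matrix (Fin r2) (Fin n3) ℝ),
        tinner (tt X1' X2 X3'' - A)
          (tt X1' X2' W3 + tt X1' W2 X3'' + tt W1 X2'' X3'') = 0) :
    ∃ (B1 : Matrix (Fin r1') (Fin r1) ℝ) (B3 : Matrix (Fin r2) (Fin r2') ℝ),
      B1ᵀ * B1 = 1 ∧ B3 * B3ᵀ = 1 ∧
      X1' = A1' * B1 ∧ X3'' = B3 * A3'' ∧ X2 = tt B1ᵀ A2 B3ᵀ := by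
  -- notation
  have hst1 : ∀ W1, tinner (tt X1' X2 X3'' - A) (tt W1 X2'' X3'') = 0 := by
    intro W1
    have h := hstat W1 0 0
    rwa [tt_zero3, tt_zero2, add_zero, zero_add] at h
  have hst2 : ∀ W2, tinner (tt X1' X2 X3'' - A) (tt X1' W2 X3'') = 0 := by
    intro W2
    have h := hstat 0 W2 0
    rwa [tt_zero3, tt_zero1, zero_add, add_zero] at h
  have hst3 : ∀ W3, tinner (tt X1' X2 X3'' - A) (tt X1' X2' W3) = 0 := by
    intro W3
    have h := hstat 0 0 W3
    rwa [tt_zero2, tt_zero1, add_zero, add_zero] at h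
  -- orthogonality of unfoldings
  have hkron3 : (X3'' ⊗ₖ (1 : Matrix (Fin n2) (Fin n2) ℝ)) *
      (X3'' ⊗ₖ (1 : Matrix (Fin n2) (Fin n2) ℝ))ᵀ = 1 := by
    rw [← Matrix.kroneckerMap_transpose, ← Matrix.mul_kronecker_mul, h3,
      Matrix.transpose_one, Matrix.mul_one, Matrix.one_kronecker_one]
  have hMM : tL (m3 X2'' X3'') * (tL (m3 X2'' X3''))ᵀ = 1 := by
    rw [tL_m3, Matrix.transpose_mul, ← Matrix.mul_assoc,
      Matrix.mul_assoc (tL X2''), hkron3, Matrix.mul_one, h2'']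
  have hkron1 : ((1 : Matrix (Fin n2) (Fin n2) ℝ) ⊗ₖ X1')ᵀ *
      ((1 : Matrix (Fin n2) (Fin n2) ℝ) ⊗ₖ X1') = 1 := by
    rw [← Matrix.kroneckerMap_transpose, ← Matrix.mul_kronecker_mul, h1,
      Matrix.transpose_one, Matrix.one_mul, Matrix.one_kronecker_one]
  have hNN : (tR (m1 X1' X2'))ᵀ * tR (m1 X1' X2') = 1 := by
    rw [tR_m1, Matrix.transpose_mul, Matrix.mul_assoc,
      ← Matrix.mul_assoc (((1 : Matrix (Fin n2) (Fin n2) ℝ) ⊗ₖ X1')ᵀ), hkron1,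
      Matrix.one_mul, h2']
  -- stationarity conditions in matrix form
  have hG1 : tL (tt X1' X2 X3'' - A) * (tL (m3 X2'' X3''))ᵀ = 0 := by
    apply eq_zero_of_trace_mul_transpose_self
    have h := hst1 (tL (tt X1' X2 X3'' - A) * (tL (m3 X2'' X3''))ᵀ)
    rw [tinner_tL, tL_tt, Matrix.transpose_mul, ← Matrix.mul_assoc] at h
    exact h
  have hG3 : (tR (m1 X1' X2'))ᵀ * tR (tt X1' X2 X3'' - A) = 0 := by
    apply eq_zero_of_trace_mul_transpose_self
    have h := hst3 ((tR (m1 X1' X2'))ᵀ * tR (tt X1' X2 X3'' - A))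
    rw [tinner_tR, tR_tt, ← Matrix.mul_assoc] at h
    rw [Matrix.trace_mul_comm, Matrix.transpose_mul, Matrix.transpose_transpose]
    exact h
  have hG2 : ∀ j, X1'ᵀ * sl (tt X1' X2 X3'' - A) j * X3''ᵀ = 0 := by
    have h := hst2 (fun p j q => (X1'ᵀ * sl (tt X1' X2 X3'' - A) j * X3''ᵀ) p q)
    rw [tinner_sl] at h
    simp only [sl_tt, trace_helper] at h
    intro j
    apply eq_zero_of_trace_mul_transpose_self
    exact (Finset.sum_eq_zero_iff_of_nonneg
      (fun j' _ => trace_mul_transpose_self_nonneg _)).mp h j (Finset.mem_univ j)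
  -- left factor
  have htLA : tL A = A1' * tL (m3 A2 A3'') := by rw [hA, tL_tt]
  have htLXX1 : tL (tt X1' X2 X3'') = X1' * tL (m3 X2 X3'') := tL_tt _ _ _
  have htLXX2 : tL (tt X1' X2 X3'') = X1 * tL (m3 X2'' X3'') := by rw [hfac2, tL_tt]
  have hMXA : tL (tt X1' X2 X3'') * (tL (m3 X2'' X3''))ᵀ
      = tL A * (tL (m3 X2'' X3''))ᵀ := by
    have h0 : (tL (tt X1' X2 X3'') - tL A) * (tL (m3 X2'' X3''))ᵀ = 0 := hG1
    rwa [Matrix.sub_mul, sub_eq_zero] at h0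
  have hXXM : tL (tt X1' X2 X3'')
      = tL A * (tL (m3 X2'' X3''))ᵀ * tL (m3 X2'' X3'') := by
    rw [← hMXA, htLXX2, Matrix.mul_assoc X1, hMM, Matrix.mul_one]
  have hLrank : (tL (m3 X2 X3'') * (tL (m3 X2 X3''))ᵀ).rank = r1 := by
    rw [Matrix.rank_self_mul_transpose]
    refine le_antisymm ?_ ?_
    · simpa using Matrix.rank_le_card_height (tL (m3 X2 X3''))
    · calc r1 = (tL (tt X1' X2 X3'')).rank := hrkL.symm
        _ = (X1' * tL (m3 X2 X3'')).rank := by rw [htLXX1]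
        _ ≤ (tL (m3 X2 X3'')).rank := Matrix.rank_mul_le_right _ _
  have hLL : IsUnit (tL (m3 X2 X3'') * (tL (m3 X2 X3''))ᵀ) :=
    isUnit_of_rank_eq _ hLrank
  have hLLinv : (tL (m3 X2 X3'') * (tL (m3 X2 X3''))ᵀ) *
      (tL (m3 X2 X3'') * (tL (m3 X2 X3''))ᵀ)⁻¹ = 1 :=
    Matrix.mul_nonsing_inv _ ((Matrix.isUnit_iff_isUnit_det _).mp hLL)
  obtain ⟨C1, hC1⟩ : ∃ C : Matrix (Fin r1') (Fin r1) ℝ, X1' = A1' * C := by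
    refine ⟨tL (m3 A2 A3'') * ((tL (m3 X2'' X3''))ᵀ * (tL (m3 X2'' X3'') *
      ((tL (m3 X2 X3''))ᵀ * (tL (m3 X2 X3'') * (tL (m3 X2 X3''))ᵀ)⁻¹))), ?_⟩
    calc X1' = X1' * ((tL (m3 X2 X3'') * (tL (m3 X2 X3''))ᵀ) *
          (tL (m3 X2 X3'') * (tL (m3 X2 X3''))ᵀ)⁻¹) := by
          rw [hLLinv, Matrix.mul_one]
      _ = (X1' * tL (m3 X2 X3'')) * ((tL (m3 X2 X3''))ᵀ *
          (tL (m3 X2 X3'') * (tL (m3 X2 X3''))ᵀ)⁻¹) := by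
          simp only [Matrix.mul_assoc]
      _ = (tL A * (tL (m3 X2'' X3''))ᵀ * tL (m3 X2'' X3'')) *
          ((tL (m3 X2 X3''))ᵀ * (tL (m3 X2 X3'') * (tL (m3 X2 X3''))ᵀ)⁻¹) := by
          rw [← htLXX1, hXXM]
      _ = A1' * (tL (m3 A2 A3'') * ((tL (m3 X2'' X3''))ᵀ * (tL (m3 X2'' X3'') *
          ((tL (m3 X2 X3''))ᵀ * (tL (m3 X2 X3'') * (tL (m3 X2 X3''))ᵀ)⁻¹)))) := by
          rw [htLA]; simp only [Matrix.mul_assoc]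
  -- right factor
  have htRA : tR A = tR (m1 A1' A2) * A3'' := by rw [hA, tR_tt]
  have htRXX1 : tR (tt X1' X2 X3'') = tR (m1 X1' X2) * X3'' := tR_tt _ _ _
  have htRXX2 : tR (tt X1' X2 X3'') = tR (m1 X1' X2') * X3 := by rw [hfac1, tR_tt]
  have hNXA : (tR (m1 X1' X2'))ᵀ * tR (tt X1' X2 X3'')
      = (tR (m1 X1' X2'))ᵀ * tR A := by
    have h0 : (tR (m1 X1' X2'))ᵀ * (tR (tt X1' X2 X3'') - tR A) = 0 := hG3
    rwa [Matrix.mul_sub, sub_eq_zero] at h0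
  have hXXN : tR (tt X1' X2 X3'')
      = tR (m1 X1' X2') * ((tR (m1 X1' X2'))ᵀ * tR A) := by
    rw [← hNXA, htRXX2, ← Matrix.mul_assoc (tR (m1 X1' X2'))ᵀ, hNN, Matrix.one_mul]
  have hRrank : ((tR (m1 X1' X2))ᵀ * tR (m1 X1' X2)).rank = r2 := by
    rw [Matrix.rank_transpose_mul_self]
    refine le_antisymm ?_ ?_
    · simpa using Matrix.rank_le_card_width (tR (m1 X1' X2))
    · calc r2 = (tR (tt X1' X2 X3'')).rank := hrkR.symm
        _ = (tR (m1 X1' X2) * X3'').rank := by rw [htRXX1]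
        _ ≤ (tR (m1 X1' X2)).rank := Matrix.rank_mul_le_left _ _
  have hRR : IsUnit ((tR (m1 X1' X2))ᵀ * tR (m1 X1' X2)) :=
    isUnit_of_rank_eq _ hRrank
  have hRRinv : ((tR (m1 X1' X2))ᵀ * tR (m1 X1' X2))⁻¹ *
      ((tR (m1 X1' X2))ᵀ * tR (m1 X1' X2)) = 1 :=
    Matrix.nonsing_inv_mul _ ((Matrix.isUnit_iff_isUnit_det _).mp hRR)
  obtain ⟨C3, hC3⟩ : ∃ C : Matrix (Fin r2) (Fin r2') ℝ, X3'' = C * A3'' := by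
    refine ⟨((tR (m1 X1' X2))ᵀ * tR (m1 X1' X2))⁻¹ * ((tR (m1 X1' X2))ᵀ *
      (tR (m1 X1' X2') * ((tR (m1 X1' X2'))ᵀ * tR (m1 A1' A2)))), ?_⟩
    calc X3'' = (((tR (m1 X1' X2))ᵀ * tR (m1 X1' X2))⁻¹ *
          ((tR (m1 X1' X2))ᵀ * tR (m1 X1' X2))) * X3'' := by
          rw [hRRinv, Matrix.one_mul]
      _ = ((tR (m1 X1' X2))ᵀ * tR (m1 X1' X2))⁻¹ * ((tR (m1 X1' X2))ᵀ *
          (tR (m1 X1' X2) * X3'')) := by simp only [Matrix.mul_assoc]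
      _ = ((tR (m1 X1' X2))ᵀ * tR (m1 X1' X2))⁻¹ * ((tR (m1 X1' X2))ᵀ *
          (tR (m1 X1' X2') * ((tR (m1 X1' X2'))ᵀ * tR A))) := by
          rw [← htRXX1, hXXN]
      _ = (((tR (m1 X1' X2))ᵀ * tR (m1 X1' X2))⁻¹ * ((tR (m1 X1' X2))ᵀ *
          (tR (m1 X1' X2') * ((tR (m1 X1' X2'))ᵀ * tR (m1 A1' A2))))) * A3'' := by
          rw [htRA]; simp only [Matrix.mul_assoc]
  -- the isometries
  have hB1 : X1' = A1' * (A1'ᵀ * X1') := by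
    calc X1' = A1' * C1 := hC1
      _ = A1' * ((A1'ᵀ * A1') * C1) := by rw [hA1, Matrix.one_mul]
      _ = A1' * (A1'ᵀ * (A1' * C1)) := by rw [Matrix.mul_assoc]
      _ = A1' * (A1'ᵀ * X1') := by rw [← hC1]
  have hB3 : X3'' = (X3'' * A3''ᵀ) * A3'' := by
    calc X3'' = C3 * A3'' := hC3
      _ = C3 * (A3'' * A3''ᵀ) * A3'' := by rw [hA3, Matrix.mul_one]
      _ = (C3 * A3'') * A3''ᵀ * A3'' := by rw [← Matrix.mul_assoc]
      _ = (X3'' * A3''ᵀ) * A3'' := by rw [← hC3]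
  refine ⟨A1'ᵀ * X1', X3'' * A3''ᵀ, ?_, ?_, hB1, hB3, ?_⟩
  · rw [Matrix.transpose_mul, Matrix.transpose_transpose, Matrix.mul_assoc, ← hB1, h1]
  · rw [Matrix.transpose_mul, Matrix.transpose_transpose, ← Matrix.mul_assoc, ← hB3, h3]
  · -- core identity
    have hsl : ∀ j, X1'ᵀ * sl (tt X1' X2 X3'') j * X3''ᵀ = X1'ᵀ * sl A j * X3''ᵀ := by
      intro j
      have h0 : X1'ᵀ * (sl (tt X1' X2 X3'') j - sl A j) * X3''ᵀ = 0 := hG2 j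
      rwa [Matrix.mul_sub, Matrix.sub_mul, sub_eq_zero] at h0
    have hXj : ∀ j, X1'ᵀ * sl (tt X1' X2 X3'') j * X3''ᵀ = sl X2 j := by
      intro j
      rw [sl_tt]
      simp only [← Matrix.mul_assoc]
      rw [h1, Matrix.one_mul, Matrix.mul_assoc, h3, Matrix.mul_one]
    have hAj : ∀ j, X1'ᵀ * sl A j * X3''ᵀ
        = (A1'ᵀ * X1')ᵀ * sl A2 j * (X3'' * A3''ᵀ)ᵀ := by
      intro j
      rw [hA, sl_tt]
      simp only [← Matrix.mul_assoc]
      rw [show X1'ᵀ * A1' = (A1'ᵀ * X1')ᵀ by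
        rw [Matrix.transpose_mul, Matrix.transpose_transpose]]
      rw [Matrix.mul_assoc, Matrix.mul_assoc, show A3'' * X3''ᵀ = (X3'' * A3''ᵀ)ᵀ by
        rw [Matrix.transpose_mul, Matrix.transpose_transpose]]
      simp only [Matrix.mul_assoc]
    have key : ∀ j, sl X2 j = sl (tt (A1'ᵀ * X1')ᵀ A2 (X3'' * A3''ᵀ)ᵀ) j := by
      intro j
      rw [sl_tt, ← hAj j, ← hsl j, hXj j]
    funext p j q
    exact congrFun (congrFun (key j) p) q
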